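/- arXiv:2502.02860 — 2 statements merged into one kernel-verified Lean document; each statement's English description precedes it below -/
import Mathlib

section
/- For any density matrix ρ with diagonal part τ (the decoherent state obtained by zeroing all off-diagonal entries), the battery capacity satisfies C(ρ; H) ≥ C(τ; H). -/
open Matrix Finset
open scoped Kronecker

/-- Sort a finite real vector in descending order. -/
noncomputable def dsort {d : ℕ} (v : Fin d → ℝ) : Fin d → ℝ :=
  fun i => v (Tuple.sort v i.rev)

/-- Battery capacity functional for descending-ordered vectors:
`cap λ ε = ∑ i, ε i * (λ i - λ (d-1-i))`. -/
noncomputable def cap {d : ℕ} (lam eps : Fin d → ℝ) : ℝ :=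
  ∑ i, eps i * (lam i - lam i.rev)

/-- Eigenvalues of a Hermitian matrix, in descending order. -/
noncomputable def eigsDesc {m : Type*} [Fintype m] [DecidableEq m] {A : Matrix m m ℂ}
    (hA : A.IsHermitian) : Fin (Fintype.card m) → ℝ :=
  dsort (hA.eigenvalues ∘ (Fintype.equivFin m).symm)

open scoped Classical in
/-- Quantum battery capacity `C(ρ; H)` (defaults to `0` on non-Hermitian inputs). -/
noncomputable def Cap {m : Type*} [Fintype m] [DecidableEq m] (ρ H : Matrix m m ℂ) : ℝ :=
  if hρ : ρ.IsHermitian then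
    if hH : H.IsHermitian then cap (eigsDesc hρ) (eigsDesc hH) else 0
  else 0

/-- Majorization `x ≺ y` of real vectors. -/
noncomputable def Maj {d : ℕ} (x y : Fin d → ℝ) : Prop :=
  (∀ k : ℕ, ∑ i : Fin d, (if (i : ℕ) < k then dsort x i else 0)
      ≤ ∑ i : Fin d, (if (i : ℕ) < k then dsort y i else 0)) ∧
  ∑ i, x i = ∑ i, y i

def σ1 : Matrix (Fin 2) (Fin 2) ℂ := !![0, 1; 1, 0]
def σ3 : Matrix (Fin 2) (Fin 2) ℂ := !![1, 0; 0, -1]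

open scoped ComplexOrder

/-! ### Auxiliary lemmas -/

section Aux

lemma dsort_antitone {d : ℕ} (v : Fin d → ℝ) : Antitone (dsort v) := by
  intro i j hij
  exact Tuple.monotone_sort v (Fin.rev_le_rev.mpr hij)

lemma dsort_comp_perm {d : ℕ} (v : Fin d → ℝ) (σ : Equiv.Perm (Fin d)) :
    dsort (v ∘ σ) = dsort v := by
  funext i
  have h := Tuple.comp_perm_comp_sort_eq_comp_sort (σ := σ) (f := v)
  have := congrFun h i.rev
  simpa [dsort, Function.comp] using this

lemma sum_comp_dsort {d : ℕ} (v : Fin d → ℝ) (g : ℝ → ℝ) :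
    ∑ i, g (dsort v i) = ∑ i, g (v i) := by
  have : ∀ i, g (dsort v i) = (g ∘ v) ((Fin.revPerm.trans (Tuple.sort v)) i) := by
    intro i; rfl
  rw [Finset.sum_congr rfl (fun i _ => this i)]
  exact Equiv.sum_comp (Fin.revPerm.trans (Tuple.sort v)) (g ∘ v)

/-- Partial sums of the top-`k` entries. -/
noncomputable def Psum {d : ℕ} (v : Fin d → ℝ) (k : ℕ) : ℝ :=
  ∑ i : Fin d, if (i : ℕ) < k then v i else 0

lemma card_filter_lt (d k : ℕ) :
    ((univ : Finset (Fin d)).filter (fun i : Fin d => (i : ℕ) < k)).card = min k d := by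
  rcases le_or_gt d k with h | h
  · rw [Finset.filter_true_of_mem (fun i _ => lt_of_lt_of_le i.isLt h)]
    simp [Nat.min_eq_right h]
  · have : (univ : Finset (Fin d)).filter (fun i : Fin d => (i : ℕ) < k) = Finset.Iio ⟨k, h⟩ := by
      ext i; simp [Fin.lt_def]
    rw [this, Fin.card_Iio]
    simp [Nat.min_eq_left h.le]

lemma Psum_eq_filter {d : ℕ} (v : Fin d → ℝ) (k : ℕ) :
    Psum v k = ∑ i ∈ (univ : Finset (Fin d)).filter (fun i : Fin d => (i : ℕ) < k), v i := by
  rw [Finset.sum_filter]; rfl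

lemma Psum_min {d : ℕ} (v : Fin d → ℝ) (k : ℕ) : Psum v (min k d) = Psum v k := by
  unfold Psum
  refine Finset.sum_congr rfl fun i _ => ?_
  have hi := i.isLt
  have h : ((i : ℕ) < min k d) ↔ ((i : ℕ) < k) := by omega
  simp only [h]

lemma Psum_all {d : ℕ} (v : Fin d → ℝ) : Psum v d = ∑ i, v i := by
  unfold Psum
  exact Finset.sum_congr rfl fun i _ => by simp [i.isLt]

lemma exists_subset_topk {d : ℕ} (v : Fin d → ℝ) (k : ℕ) :
    ∃ T : Finset (Fin d), T.card = min k d ∧ ∑ i ∈ T, v i = Psum (dsort v) k := by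
  set e := (Fin.revPerm.trans (Tuple.sort v)) with he
  refine ⟨((univ : Finset (Fin d)).filter (fun i : Fin d => (i : ℕ) < k)).image e, ?_, ?_⟩
  · rw [Finset.card_image_of_injective _ e.injective, card_filter_lt]
  · rw [Finset.sum_image (fun a _ b _ h => e.injective h), Psum_eq_filter]
    rfl

lemma dot_le_topk {d : ℕ} (lam c : Fin d → ℝ) (m : ℕ) (hm : m ≤ d)
    (hc0 : ∀ j, 0 ≤ c j) (hc1 : ∀ j, c j ≤ 1) (hsum : ∑ j, c j = m) :
    ∑ j, c j * lam j ≤ Psum (dsort lam) m := by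
  rcases Nat.eq_zero_or_pos m with rfl | hm0
  · have hc : ∀ j : Fin d, c j = 0 := fun j =>
      (Finset.sum_eq_zero_iff_of_nonneg (fun j _ => hc0 j)).mp (by simpa using hsum) j (mem_univ j)
    have hz : ∑ j, c j * lam j = 0 := Finset.sum_eq_zero (fun j _ => by rw [hc j, zero_mul])
    simp [Psum, hz]
  · set t := dsort lam ⟨m - 1, by omega⟩ with ht
    have key : ∀ j, c j * lam j ≤ max (lam j - t) 0 + c j * t := by
      intro j
      rcases le_or_gt t (lam j) with h | h
      · have : c j * (lam j - t) ≤ lam j - t := by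
          nlinarith [hc0 j, hc1 j]
        have h2 : max (lam j - t) 0 = lam j - t := max_eq_left (by linarith)
        nlinarith
      · have : c j * (lam j - t) ≤ 0 := mul_nonpos_of_nonneg_of_nonpos (hc0 j) (by linarith)
        have h2 : (0:ℝ) ≤ max (lam j - t) 0 := le_max_right _ _
        nlinarith
    have step1 : ∑ j, c j * lam j ≤ ∑ j, max (lam j - t) 0 + m * t := by
      calc ∑ j, c j * lam j ≤ ∑ j, (max (lam j - t) 0 + c j * t) :=
            Finset.sum_le_sum (fun j _ => key j)
        _ = ∑ j, max (lam j - t) 0 + (∑ j, c j) * t := by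
            rw [Finset.sum_add_distrib, ← Finset.sum_mul]
        _ = ∑ j, max (lam j - t) 0 + m * t := by rw [hsum]
    have step2 : ∑ j, max (lam j - t) 0
        = ∑ i : Fin d, if (i : ℕ) < m then dsort lam i - t else 0 := by
      rw [← sum_comp_dsort lam (fun x => max (x - t) 0)]
      refine Finset.sum_congr rfl (fun i _ => ?_)
      rcases lt_or_ge (i : ℕ) m with h | h
      · have hle : i ≤ (⟨m - 1, by omega⟩ : Fin d) := by
          rw [Fin.le_def]; simp; omega
        have h1 : t ≤ dsort lam i := dsort_antitone lam hle
        simp only [if_pos h]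
        exact max_eq_left (sub_nonneg.mpr h1)
      · have hle : (⟨m - 1, by omega⟩ : Fin d) ≤ i := by
          rw [Fin.le_def]; simp; omega
        have h1 : dsort lam i ≤ t := dsort_antitone lam hle
        simp only [if_neg (Nat.not_lt.mpr h)]
        exact max_eq_right (sub_nonpos.mpr h1)
    have step3 : ∑ i : Fin d, (if (i : ℕ) < m then dsort lam i - t else 0)
        = Psum (dsort lam) m - m * t := by
      have : ∀ i : Fin d, (if (i : ℕ) < m then dsort lam i - t else 0)
          = (if (i : ℕ) < m then dsort lam i else 0) - (if (i : ℕ) < m then t else 0) := by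
        intro i; split <;> simp
      rw [Finset.sum_congr rfl (fun i _ => this i), Finset.sum_sub_distrib]
      have hconst : (∑ i : Fin d, if (i : ℕ) < m then t else 0) = (m : ℝ) * t := by
        rw [← Finset.sum_filter, Finset.sum_const, card_filter_lt, Nat.min_eq_left hm,
          nsmul_eq_mul]
      rw [hconst]
      rfl
    rw [step2, step3] at step1
    linarith

lemma unitary_row_sum {d : ℕ} (V : Matrix (Fin d) (Fin d) ℂ)
    (hV : V ∈ Matrix.unitaryGroup (Fin d) ℂ) (i : Fin d) :
    ∑ j, Complex.normSq (V i j) = 1 := by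
  have h := Matrix.mem_unitaryGroup_iff.mp hV
  have h2 := congrFun (congrFun h i) i
  rw [Matrix.mul_apply] at h2
  rw [Matrix.one_apply_eq] at h2
  have h3 : ∑ j, ((Complex.normSq (V i j) : ℂ)) = 1 := by
    rw [← h2]
    refine Finset.sum_congr rfl (fun j _ => ?_)
    rw [Matrix.star_apply, Complex.star_def, Complex.mul_conj]
  have := congrArg Complex.re h3
  simpa [Complex.re_sum] using this

lemma unitary_col_sum {d : ℕ} (V : Matrix (Fin d) (Fin d) ℂ)
    (hV : V ∈ Matrix.unitaryGroup (Fin d) ℂ) (j : Fin d) :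
    ∑ i, Complex.normSq (V i j) = 1 := by
  have h := Matrix.mem_unitaryGroup_iff'.mp hV
  have h2 := congrFun (congrFun h j) j
  rw [Matrix.mul_apply] at h2
  rw [Matrix.one_apply_eq] at h2
  have h3 : ∑ i, ((Complex.normSq (V i j) : ℂ)) = 1 := by
    rw [← h2]
    refine Finset.sum_congr rfl (fun i _ => ?_)
    rw [Matrix.star_apply, Complex.star_def, mul_comm, Complex.mul_conj]
  have := congrArg Complex.re h3
  simpa [Complex.re_sum] using this

lemma diag_entry_formula {d : ℕ} (V : Matrix (Fin d) (Fin d) ℂ) (μ : Fin d → ℝ) (i : Fin d) :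
    ((V * Matrix.diagonal (fun j => (μ j : ℂ)) * star V) i i).re
      = ∑ j, Complex.normSq (V i j) * μ j := by
  rw [Matrix.mul_apply]
  have : ∀ j, (V * Matrix.diagonal (fun j => (μ j : ℂ))) i j * (star V) j i
      = ((Complex.normSq (V i j) * μ j : ℝ) : ℂ) := by
    intro j
    rw [Matrix.mul_diagonal, Matrix.star_apply, Complex.star_def,
      mul_comm (V i j) ((μ j : ℂ)), mul_assoc, Complex.mul_conj]
    push_cast
    ring
  rw [Finset.sum_congr rfl (fun j _ => this j)]
  rw [← Complex.ofReal_sum]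
  simp

/-- **Schur–Horn (easy direction).** If `M = V diag(μ) V⋆` with `V` unitary, then the
diagonal of `M` is majorized by `μ`. -/
lemma schur_horn {d : ℕ} (V : Matrix (Fin d) (Fin d) ℂ)
    (hV : V ∈ Matrix.unitaryGroup (Fin d) ℂ) (μ a : Fin d → ℝ)
    (ha : ∀ i, a i = ((V * Matrix.diagonal (fun j => (μ j : ℂ)) * star V) i i).re) :
    (∀ k, Psum (dsort a) k ≤ Psum (dsort μ) k) ∧ ∑ i, a i = ∑ i, μ i := by
  have ha' : ∀ i, a i = ∑ j, Complex.normSq (V i j) * μ j := fun i => by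
    rw [ha i, diag_entry_formula]
  constructor
  · intro k
    obtain ⟨T, hTcard, hTsum⟩ := exists_subset_topk a k
    set c : Fin d → ℝ := fun j => ∑ i ∈ T, Complex.normSq (V i j) with hc
    have hc0 : ∀ j, 0 ≤ c j := fun j => Finset.sum_nonneg fun i _ => Complex.normSq_nonneg _
    have hc1 : ∀ j, c j ≤ 1 := fun j => by
      rw [hc]
      calc ∑ i ∈ T, Complex.normSq (V i j)
          ≤ ∑ i, Complex.normSq (V i j) :=
            Finset.sum_le_sum_of_subset_of_nonneg (Finset.subset_univ T)
              (fun i _ _ => Complex.normSq_nonneg _)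
        _ = 1 := unitary_col_sum V hV j
    have hcs : ∑ j, c j = ((min k d : ℕ) : ℝ) := by
      rw [hc]
      rw [Finset.sum_comm]
      rw [Finset.sum_congr rfl (fun i (_ : i ∈ T) => unitary_row_sum V hV i)]
      simp [hTcard]
    have h1 : Psum (dsort a) k = ∑ j, c j * μ j := by
      rw [← hTsum, Finset.sum_congr rfl (fun i (_ : i ∈ T) => ha' i), Finset.sum_comm]
      refine Finset.sum_congr rfl fun j _ => ?_
      rw [hc, Finset.sum_mul]
    rw [h1]
    calc ∑ j, c j * μ j ≤ Psum (dsort μ) (min k d) :=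
          dot_le_topk μ c (min k d) (min_le_right _ _) hc0 hc1 hcs
      _ = Psum (dsort μ) k := Psum_min (dsort μ) k
  · rw [Finset.sum_congr rfl (fun i (_ : i ∈ univ) => ha' i), Finset.sum_comm]
    refine Finset.sum_congr rfl fun j _ => ?_
    rw [← Finset.sum_mul, unitary_col_sum V hV j, one_mul]

/-- Abel-summation comparison. -/
lemma abel_sum_le (n : ℕ) (F X Y : ℕ → ℝ)
    (hF : ∀ k, F (k + 1) ≤ F k)
    (hS : ∀ k, ∑ i ∈ Finset.range k, X i ≤ ∑ i ∈ Finset.range k, Y i)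
    (hT : ∑ i ∈ Finset.range n, X i = ∑ i ∈ Finset.range n, Y i) :
    ∑ i ∈ Finset.range n, F i * X i ≤ ∑ i ∈ Finset.range n, F i * Y i := by
  have hx := Finset.sum_range_by_parts F X n
  have hy := Finset.sum_range_by_parts F Y n
  simp only [smul_eq_mul] at hx hy
  rw [hx, hy, hT]
  have key : ∀ i ∈ Finset.range (n - 1),
      (F (i + 1) - F i) * (∑ j ∈ Finset.range (i + 1), Y j)
        ≤ (F (i + 1) - F i) * (∑ j ∈ Finset.range (i + 1), X j) :=
    fun i _ => mul_le_mul_of_nonpos_left (hS (i + 1)) (by linarith [hF i])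
  linarith [Finset.sum_le_sum key]

lemma range_sum_eq_Psum {n : ℕ} (x : Fin n → ℝ) (k : ℕ) :
    ∑ i ∈ Finset.range k, (if h : i < n then x ⟨i, h⟩ else 0) = Psum x k := by
  induction k with
  | zero => simp [Psum]
  | succ k ih =>
    rw [Finset.sum_range_succ, ih]
    have hsplit : ∀ i : Fin n, (if (i : ℕ) < k + 1 then x i else 0)
        = (if (i : ℕ) < k then x i else 0) + (if (i : ℕ) = k then x i else 0) := by
      intro i
      rcases lt_trichotomy (i : ℕ) k with h | h | h
      · rw [if_pos (by omega), if_pos h, if_neg (by omega), add_zero]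
      · rw [if_pos (by omega), if_neg (by omega), if_pos h, zero_add]
      · rw [if_neg (by omega), if_neg (by omega), if_neg (by omega), add_zero]
    unfold Psum
    rw [Finset.sum_congr rfl (fun i _ => hsplit i), Finset.sum_add_distrib]
    congr 1
    rcases lt_or_ge k n with h | h
    · have : ∀ i : Fin n, ((i : ℕ) = k) ↔ (i = ⟨k, h⟩) := by
        intro i; constructor
        · intro hi; exact Fin.ext hi
        · intro hi; rw [hi]
      rw [Finset.sum_congr rfl (fun i _ => by rw [if_congr (this i) rfl rfl])]
      rw [Finset.sum_ite_eq' univ (⟨k, h⟩ : Fin n) x]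
      simp [h]
    · rw [dif_neg (Nat.not_lt.mpr h)]
      symm
      refine Finset.sum_eq_zero fun i _ => ?_
      have := i.isLt
      rw [if_neg (by omega)]

/-- Schur-convexity of the capacity functional. -/
lemma cap_le_cap {n : ℕ} (x y eps : Fin n → ℝ) (heps : Antitone eps)
    (hP : ∀ k, Psum x k ≤ Psum y k) (hT : ∑ i, x i = ∑ i, y i) :
    cap x eps ≤ cap y eps := by
  rcases Nat.eq_zero_or_pos n with rfl | hn
  · simp [cap]
  -- rewrite cap as a single weighted sum
  have hcap : ∀ z : Fin n → ℝ, cap z eps = ∑ i, (eps i - eps i.rev) * z i := by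
    intro z
    unfold cap
    have h2 : ∑ i, eps i * z i.rev = ∑ i, eps i.rev * z i := by
      have := Equiv.sum_comp Fin.revPerm (fun i => eps i.rev * z i)
      simpa [Fin.rev_rev] using this
    rw [Finset.sum_congr rfl (fun i _ => mul_sub (eps i) (z i) (z i.rev)),
      Finset.sum_sub_distrib, h2, ← Finset.sum_sub_distrib]
    exact Finset.sum_congr rfl fun i _ => by ring
  have hf : Antitone (fun i : Fin n => eps i - eps i.rev) := by
    intro i j hij
    have h1 : eps j ≤ eps i := heps hij
    have h2 : eps i.rev ≤ eps j.rev := heps (Fin.rev_le_rev.mpr hij)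
    simp only
    linarith
  set f : Fin n → ℝ := fun i => eps i - eps i.rev with hfdef
  set F : ℕ → ℝ := fun k => f ⟨min k (n - 1), by omega⟩ with hF
  set X : ℕ → ℝ := fun k => if h : k < n then x ⟨k, h⟩ else 0 with hX
  set Y : ℕ → ℝ := fun k => if h : k < n then y ⟨k, h⟩ else 0 with hY
  have hfin : ∀ z : Fin n → ℝ, (Z : ℕ → ℝ) → (∀ k, Z k = if h : k < n then z ⟨k, h⟩ else 0) →
      ∑ i ∈ Finset.range n, F i * Z i = ∑ i, f i * z i := by
    intro z Z hZ
    rw [Finset.sum_range fun i => F i * Z i]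
    refine Finset.sum_congr rfl fun i _ => ?_
    have h1 : F (i : ℕ) = f i := by
      have hmin : min ((i : ℕ)) (n - 1) = (i : ℕ) := by have := i.isLt; omega
      show f ⟨min ((i : ℕ)) (n - 1), by have := i.isLt; omega⟩ = f i
      congr 1
      exact Fin.ext hmin
    have h2 : Z (i : ℕ) = z i := by rw [hZ, dif_pos i.isLt]
    rw [h1, h2]
  have habel : ∑ i ∈ Finset.range n, F i * X i ≤ ∑ i ∈ Finset.range n, F i * Y i := by
    apply abel_sum_le
    · intro k
      exact hf (by simp only [Fin.mk_le_mk]; omega)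
    · intro k
      rw [range_sum_eq_Psum x k, range_sum_eq_Psum y k]
      exact hP k
    · rw [range_sum_eq_Psum x n, range_sum_eq_Psum y n, Psum_all, Psum_all]
      exact hT
  rw [hcap x, hcap y]
  rw [← hfin x X (fun k => rfl), ← hfin y Y (fun k => rfl)]
  exact habel

lemma Psum_dsort_reindex {m n : ℕ} (e : Fin m ≃ Fin n) (v : Fin m → ℝ) :
    ∀ k, Psum (dsort (v ∘ e.symm)) k = Psum (dsort v) k := by
  have hmn : m = n := by simpa using Fintype.card_congr e
  subst hmn
  intro k
  rw [dsort_comp_perm v e.symm]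

end Aux

/-- The capacity of a state dominates the capacity of its decoherent
(diagonal) part. -/
theorem cap_ge_cap_decoherent (d : ℕ) (ρ H : Matrix (Fin d) (Fin d) ℂ)
    (hρ : ρ.PosSemidef) (htr : ρ.trace = 1) (hH : H.IsHermitian) :
    Cap (Matrix.diagonal (fun i => ρ i i)) H ≤ Cap ρ H := by
  classical
  have hρ' : ρ.IsHermitian := hρ.1
  set a : Fin d → ℝ := fun i => (ρ i i).re with hadef
  have hdiag : ∀ i, ρ i i = ((a i : ℝ) : ℂ) := by
    intro i
    have h := hρ'.apply i i
    rw [Complex.star_def] at h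
    exact (Complex.conj_eq_iff_re.mp h).symm
  have hτeq : (Matrix.diagonal fun i => ρ i i) = Matrix.diagonal (fun i => ((a i : ℝ) : ℂ)) := by
    rw [show (fun i => ρ i i) = (fun i => ((a i : ℝ) : ℂ)) from funext hdiag]
  have hτ : (Matrix.diagonal fun i => ρ i i).IsHermitian := by
    rw [hτeq]
    exact Matrix.isHermitian_diagonal_of_self_adjoint _
      (by show star _ = _; funext i; exact Complex.conj_ofReal (a i))
  unfold Cap
  rw [dif_pos hτ, dif_pos hρ', dif_pos hH, dif_pos hH]
  -- Schur--Horn for ρ : diagonal ≺ eigenvalues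
  set μρ : Fin d → ℝ := hρ'.eigenvalues with hμρ
  have hSHρ := schur_horn (hρ'.eigenvectorUnitary : Matrix (Fin d) (Fin d) ℂ)
    (hρ'.eigenvectorUnitary).2 μρ a (fun i => by
      conv_lhs => rw [hadef]
      congr 1
      conv_lhs => rw [hρ'.spectral_theorem]
      rfl)
  -- Schur--Horn for τ in reverse : eigenvalues of τ ≺ diagonal a
  set τ : Matrix (Fin d) (Fin d) ℂ := Matrix.diagonal fun i => ρ i i with hτdef
  set μτ : Fin d → ℝ := hτ.eigenvalues with hμτ
  set U : Matrix (Fin d) (Fin d) ℂ := (hτ.eigenvectorUnitary : Matrix (Fin d) (Fin d) ℂ) with hU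
  have hUmem : U ∈ Matrix.unitaryGroup (Fin d) ℂ := (hτ.eigenvectorUnitary).2
  have hUstar : star U ∈ Matrix.unitaryGroup (Fin d) ℂ := Unitary.star_mem hUmem
  have hdiagτ : star U * τ * U = Matrix.diagonal (fun j => ((μτ j : ℝ) : ℂ)) :=
    by
      have h := hτ.conjStarAlgAut_star_eigenvectorUnitary
      rw [Unitary.conjStarAlgAut_apply] at h
      simp only [Unitary.coe_star, star_star] at h
      exact h
  have hSHτ := schur_horn (star U) hUstar a μτ (fun i => by
    have : star U * Matrix.diagonal (fun j => ((a j : ℝ) : ℂ)) * star (star U)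
        = Matrix.diagonal (fun j => ((μτ j : ℝ) : ℂ)) := by
      rw [star_star, ← hτeq]
      exact hdiagτ
    rw [this]
    simp [Matrix.diagonal_apply_eq])
  -- chain of majorizations
  have hchainP : ∀ k, Psum (dsort μτ) k ≤ Psum (dsort μρ) k :=
    fun k => le_trans (hSHτ.1 k) (hSHρ.1 k)
  have hchainT : ∑ i, μτ i = ∑ i, μρ i := hSHτ.2.trans hSHρ.2
  -- transfer to eigsDesc
  set e := (Fintype.equivFin (Fin d)) with he
  have hPs : ∀ k, Psum (eigsDesc hτ) k ≤ Psum (eigsDesc hρ') k := by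
    intro k
    unfold eigsDesc
    rw [Psum_dsort_reindex e μτ k, Psum_dsort_reindex e μρ k]
    exact hchainP k
  have hTs : ∑ i, eigsDesc hτ i = ∑ i, eigsDesc hρ' i := by
    unfold eigsDesc
    have h1 : ∑ i, dsort (μτ ∘ e.symm) i = ∑ i, μτ i := by
      rw [show ∑ i, dsort (μτ ∘ e.symm) i = ∑ i, (μτ ∘ e.symm) i from sum_comp_dsort _ id]
      exact e.symm.sum_comp μτ
    have h2 : ∑ i, dsort (μρ ∘ e.symm) i = ∑ i, μρ i := by
      rw [show ∑ i, dsort (μρ ∘ e.symm) i = ∑ i, (μρ ∘ e.symm) i from sum_comp_dsort _ id]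
      exact e.symm.sum_comp μρ
    rw [h1, h2]
    exact hchainT
  exact cap_le_cap _ _ _ (dsort_antitone _) hPs hTs
end

section
/- For a diagonal two-qubit density matrix ρ_ic with diagonal entries ρ₁₁,...,ρ₄₄ whose descending rearrangement is α₁ ≥ α₂ ≥ α₃ ≥ α₄, and for the Hamiltonian H_AB = ε^A σ₃⊗I + ε^B I⊗σ₃ + γ σ₁⊗σ₁ with ε^A ≥ ε^B ≥ 0 and γ ≥ 0, one has C(ρ_ic; H_AB) ≥ C(ρ_A; ε^A σ₃) + C(ρ_B; ε^B σ₃), where ρ_A, ρ_B are the reduced states. -/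
open Matrix Finset
open scoped Kronecker

open scoped ComplexOrder

/-- The two-qubit Hamiltonian of Eq. (3). -/
noncomputable def HAB (eA eB g : ℝ) : Matrix (Fin 2 × Fin 2) (Fin 2 × Fin 2) ℂ :=
  (eA : ℂ) • (σ3 ⊗ₖ (1 : Matrix (Fin 2) (Fin 2) ℂ)) +
  (eB : ℂ) • ((1 : Matrix (Fin 2) (Fin 2) ℂ) ⊗ₖ σ3) +
  (g : ℂ) • (σ1 ⊗ₖ σ1)

/-! ### Auxiliary lemmas -/

section Dsort

lemma dsort_eq_of_perm {d : ℕ} {v w : Fin d → ℝ} (h : (List.ofFn v).Perm (List.ofFn w)) :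
    dsort v = dsort w := by
  have h1 : (List.ofFn (v ∘ Tuple.sort v)).Perm (List.ofFn (w ∘ Tuple.sort w)) :=
    ((Equiv.Perm.ofFn_comp_perm _ v).trans h).trans (Equiv.Perm.ofFn_comp_perm _ w).symm
  have h2 : List.ofFn (v ∘ Tuple.sort v) = List.ofFn (w ∘ Tuple.sort w) := by
    haveI : IsAntisymm ℝ (· ≤ ·) := ⟨fun _ _ => le_antisymm⟩
    refine List.Perm.eq_of_sortedLE ?_ ?_ h1
    · exact (List.sortedLE_ofFn_iff).2 (Tuple.monotone_sort v)
    · exact (List.sortedLE_ofFn_iff).2 (Tuple.monotone_sort w)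
  have h3 : v ∘ Tuple.sort v = w ∘ Tuple.sort w := List.ofFn_injective h2
  funext i
  exact congrFun h3 i.rev

lemma dsort_eq_self_of_antitone {d : ℕ} {v : Fin d → ℝ} (hv : Antitone v) : dsort v = v := by
  have h : v ∘ (Fin.revPerm : Equiv.Perm (Fin d)) = v ∘ Tuple.sort v :=
    Tuple.comp_sort_eq_comp_iff_monotone.2
      (fun i j hij => hv (by simpa using Fin.rev_le_rev.mpr hij))
  funext i
  have := congrFun h.symm i.rev
  simpa [dsort] using this

lemma dsort_perm_exists {d : ℕ} (v : Fin d → ℝ) :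
    ∃ e : Equiv.Perm (Fin d), dsort v = v ∘ e :=
  ⟨(Fin.revPerm : Equiv.Perm (Fin d)).trans (Tuple.sort v), rfl⟩

lemma antitone_pair {a b : ℝ} (h : b ≤ a) : Antitone (![a, b]) := by
  intro i j hij
  fin_cases i <;> fin_cases j <;> simp_all [Fin.le_def] <;> linarith

lemma antitone_four {a b c d : ℝ} (h1 : b ≤ a) (h2 : c ≤ b) (h3 : d ≤ c) :
    Antitone (![a, b, c, d]) := by
  intro i j hij
  fin_cases i <;> fin_cases j <;>
    simp_all [Fin.le_def, show ((3:Fin 4):ℕ) = 3 from rfl, show ((2:Fin 4):ℕ) = 2 from rfl] <;>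
    linarith

lemma dsort_pair (a b : ℝ) : dsort ![a, b] = ![max a b, min a b] := by
  rcases le_total b a with h | h
  · rw [dsort_eq_self_of_antitone (antitone_pair h)]
    funext i; fin_cases i <;> simp [max_eq_left h, min_eq_right h]
  · have hs : ![a, b] ∘ (Equiv.swap (0 : Fin 2) 1) = ![b, a] := by
      funext i; fin_cases i <;> simp [Equiv.swap_apply_left, Equiv.swap_apply_right]
    have hperm := dsort_comp_perm ![a, b] (Equiv.swap 0 1)
    rw [hs] at hperm
    rw [← hperm, dsort_eq_self_of_antitone (antitone_pair h)]
    funext i; fin_cases i <;> simp [max_eq_right h, min_eq_left h]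

end Dsort

section Charpoly

open Polynomial

lemma charpoly_conj {n : Type*} [Fintype n] [DecidableEq n] (U V D : Matrix n n ℂ)
    (hUV : U * V = 1) :
    (U * D * V).charpoly = D.charpoly := by
  have hmap : (U * D * V).charmatrix = U.map C * D.charmatrix * V.map C := by
    rw [charmatrix, charmatrix]
    have h1 : (U * D * V).map (C : ℂ →+* ℂ[X]) = U.map C * D.map C * V.map C := by
      rw [← Matrix.map_mul, ← Matrix.map_mul]
    have h2 : (U.map (C : ℂ →+* ℂ[X])) * (Matrix.scalar n (X : ℂ[X])) * V.map C
        = Matrix.scalar n (X : ℂ[X]) := by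
      rw [Matrix.scalar_apply, ← Matrix.op_smul_eq_mul_diagonal, Matrix.smul_mul,
        ← Matrix.map_mul, hUV]
      ext i j
      by_cases h : i = j
      · subst h; simp [Matrix.one_apply, Matrix.diagonal_apply]
      · simp [Matrix.one_apply, Matrix.diagonal_apply, h]
    rw [Matrix.mul_sub, Matrix.sub_mul]
    have h3 : (C : ℂ →+* ℂ[X]).mapMatrix (U * D * V) = (U * D * V).map C := rfl
    have h4 : (C : ℂ →+* ℂ[X]).mapMatrix D = D.map C := rfl
    rw [h3, h4, h1, h2]
  have hdet : ((U.map (C : ℂ →+* ℂ[X])) * (V.map C) : Matrix n n ℂ[X]).det = 1 := by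
    rw [← Matrix.map_mul, hUV]; simp
  rw [Matrix.charpoly, Matrix.charpoly, hmap, Matrix.det_mul, Matrix.det_mul]
  rw [mul_comm ((U.map (C : ℂ →+* ℂ[X])).det) _, mul_assoc, ← Matrix.det_mul, hdet, mul_one]

lemma charpoly_diagonal {n : Type*} [Fintype n] [DecidableEq n] (d : n → ℂ) :
    (Matrix.diagonal d).charpoly = ∏ i, (X - C (d i)) := by
  rw [Matrix.charpoly]
  have h : (Matrix.diagonal d).charmatrix = Matrix.diagonal (fun i => (X : ℂ[X]) - C (d i)) := by
    ext i j
    by_cases h : i = j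
    · subst h; simp [Matrix.charmatrix_apply_eq]
    · rw [Matrix.charmatrix_apply_ne _ _ _ h, Matrix.diagonal_apply_ne _ h]
      simp [Matrix.diagonal_apply_ne _ h]
  rw [h, Matrix.det_diagonal]

lemma charpoly_hermitian {n : Type*} [Fintype n] [DecidableEq n] {A : Matrix n n ℂ}
    (hA : A.IsHermitian) :
    A.charpoly = ∏ i, (X - C ((hA.eigenvalues i : ℝ) : ℂ)) := by
  conv_lhs => rw [hA.spectral_theorem]
  rw [Unitary.conjStarAlgAut_apply]
  rw [charpoly_conj _ _ _ ((Matrix.mem_unitaryGroup_iff).mp (hA.eigenvectorUnitary).2)]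
  rw [_root_.charpoly_diagonal]
  rfl

lemma prod_roots {d : ℕ} (f : Fin d → ℝ) :
    (∏ i, ((X : ℂ[X]) - C ((f i : ℝ) : ℂ))).roots
      = Multiset.map (fun i => ((f i : ℝ) : ℂ)) Finset.univ.val := by
  have h1 : Multiset.map (fun i => (X : ℂ[X]) - C ((f i : ℝ) : ℂ)) Finset.univ.val
      = Multiset.map (fun a : ℂ => (X : ℂ[X]) - C a)
          (Multiset.map (fun i => ((f i : ℝ) : ℂ)) Finset.univ.val) := by
    simp only [Multiset.map_map]; rfl
  rw [Finset.prod_eq_multiset_prod, h1, Polynomial.roots_multiset_prod_X_sub_C]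

lemma multiset_to_perm {d : ℕ} {v w : Fin d → ℝ}
    (h : Multiset.map v Finset.univ.val = Multiset.map w Finset.univ.val) :
    (List.ofFn v).Perm (List.ofFn w) := by
  rw [Fin.univ_def] at h
  simp only [Multiset.map_coe, Multiset.coe_eq_coe] at h
  simpa [List.ofFn_eq_map] using h

lemma eigsDesc_eq_dsort {m : Type*} [Fintype m] [DecidableEq m] {A : Matrix m m ℂ}
    (hA : A.IsHermitian) (v : Fin (Fintype.card m) → ℝ)
    (h : A.charpoly = ∏ i, (X - C ((v i : ℝ) : ℂ))) :
    eigsDesc hA = dsort v := by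
  set w : Fin (Fintype.card m) → ℝ := hA.eigenvalues ∘ (Fintype.equivFin m).symm with hwdef
  have hw : A.charpoly = ∏ i, (X - C ((w i : ℝ) : ℂ)) := by
    rw [charpoly_hermitian hA]
    exact (Fintype.prod_equiv (Fintype.equivFin m).symm _ _ (fun i => rfl)).symm
  have hroots : Multiset.map (fun i => ((w i : ℝ) : ℂ)) Finset.univ.val
      = Multiset.map (fun i => ((v i : ℝ) : ℂ)) Finset.univ.val := by
    rw [← prod_roots w, ← prod_roots v, ← hw, ← h]
  have hmm : Multiset.map w Finset.univ.val = Multiset.map v Finset.univ.val := by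
    have h2 : ∀ u : Fin (Fintype.card m) → ℝ,
        Multiset.map (fun i => ((u i : ℝ) : ℂ)) Finset.univ.val
          = Multiset.map (fun x : ℝ => (x : ℂ)) (Multiset.map u Finset.univ.val) := by
      intro u; rw [Multiset.map_map]; rfl
    rw [h2 w, h2 v] at hroots
    exact Multiset.map_injective Complex.ofReal_injective hroots
  exact dsort_eq_of_perm (multiset_to_perm hmm)

end Charpoly

section Concrete

open Polynomial

noncomputable def E1 (eA eB g : ℝ) : ℝ := Real.sqrt ((eA + eB)^2 + g^2)
noncomputable def E2 (eA eB g : ℝ) : ℝ := Real.sqrt ((eA - eB)^2 + g^2)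

noncomputable def M4 (eA eB g : ℝ) : Matrix (Fin 4) (Fin 4) ℂ :=
  !![(eA + eB : ℂ), 0, 0, (g:ℂ);
     0, (eA - eB : ℂ), (g:ℂ), 0;
     0, (g:ℂ), (-eA + eB : ℂ), 0;
     (g:ℂ), 0, 0, (-eA - eB : ℂ)]

def e4 : Fin 2 × Fin 2 ≃ Fin 4 where
  toFun x := ![![0, 1], ![2, 3]] x.1 x.2
  invFun := ![(0, 0), (0, 1), (1, 0), (1, 1)]
  left_inv := by decide
  right_inv := by decide

lemma HAB_reindex (eA eB g : ℝ) :
    HAB eA eB g = Matrix.reindex e4.symm e4.symm (M4 eA eB g) := by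
  ext ⟨i, j⟩ ⟨k, l⟩
  fin_cases i <;> fin_cases j <;> fin_cases k <;> fin_cases l <;>
    simp [HAB, M4, σ1, σ3, Matrix.one_apply, e4] <;> ring

lemma charpoly_M4 (eA eB g : ℝ) :
    (M4 eA eB g).charpoly
      = ∏ i, (X - C ((![E1 eA eB g, E2 eA eB g, -(E2 eA eB g), -(E1 eA eB g)] i : ℝ) : ℂ)) := by
  have h1 : ((E1 eA eB g : ℝ) : ℂ)^2 = ((eA : ℂ) + eB)^2 + (g : ℂ)^2 := by
    have h : (E1 eA eB g)^2 = (eA + eB)^2 + g^2 := Real.sq_sqrt (by positivity)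
    rw [show ((E1 eA eB g : ℝ) : ℂ)^2 = (((E1 eA eB g)^2 : ℝ) : ℂ) by push_cast; ring, h]
    push_cast; ring
  have h2 : ((E2 eA eB g : ℝ) : ℂ)^2 = ((eA : ℂ) - eB)^2 + (g : ℂ)^2 := by
    have h : (E2 eA eB g)^2 = (eA - eB)^2 + g^2 := Real.sq_sqrt (by positivity)
    rw [show ((E2 eA eB g : ℝ) : ℂ)^2 = (((E2 eA eB g)^2 : ℝ) : ℂ) by push_cast; ring, h]
    push_cast; ring
  have hrhs : ∏ i, ((X : ℂ[X])
        - C ((![E1 eA eB g, E2 eA eB g, -(E2 eA eB g), -(E1 eA eB g)] i : ℝ) : ℂ))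
      = ((X : ℂ[X])^2 - C (((eA : ℂ) + eB)^2 + (g : ℂ)^2))
          * ((X : ℂ[X])^2 - C (((eA : ℂ) - eB)^2 + (g : ℂ)^2)) := by
    rw [Fin.prod_univ_four]
    simp only [Matrix.cons_val_zero, Matrix.cons_val_one, Matrix.head_cons,
      Matrix.cons_val_two, Matrix.cons_val_three, Matrix.tail_cons]
    rw [← h1, ← h2]
    push_cast
    simp only [map_neg, map_pow]
    ring
  rw [hrhs, Matrix.charpoly]
  have hcm : (M4 eA eB g).charmatrix
      = !![X - C (eA + eB : ℂ), 0, 0, -C (g:ℂ);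
           0, X - C (eA - eB : ℂ), -C (g:ℂ), 0;
           0, -C (g:ℂ), X - C (-eA + eB : ℂ), 0;
           -C (g:ℂ), 0, 0, X - C (-eA - eB : ℂ)] := by
    ext i j
    fin_cases i <;> fin_cases j <;>
      simp [M4, Matrix.charmatrix_apply_eq, Matrix.charmatrix_apply_ne]
  rw [hcm, Matrix.det_succ_row_zero]
  simp only [Fin.sum_univ_succ, Fin.sum_univ_zero]
  norm_num [Matrix.det_fin_three, Matrix.submatrix, Matrix.det_fin_two, Fin.succAbove,
    Fin.castSucc, Fin.castAdd, Fin.castLE, Fin.lt_def]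
  simp only [Matrix.cons_val_two, Matrix.vecHead, Matrix.vecTail, Function.comp_apply,
    Matrix.cons_val_succ, Matrix.cons_val_zero]
  try simp only [_root_.map_add, _root_.map_sub, map_neg, _root_.map_mul, map_pow]
  ring

lemma herm_diag_real {n : Type*} [Fintype n] [DecidableEq n] (f : n → ℝ) :
    (Matrix.diagonal (fun i => ((f i : ℝ) : ℂ))).IsHermitian := by
  have hst : (star fun i : n => ((f i : ℝ) : ℂ)) = fun i : n => ((f i : ℝ) : ℂ) := by
    funext i; exact Complex.conj_ofReal (f i)
  rw [Matrix.IsHermitian, Matrix.diagonal_conjTranspose, hst]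

lemma smul_σ3_eq_diag (e : ℝ) :
    (e : ℂ) • σ3 = Matrix.diagonal (fun i => ((![e, -e] i : ℝ) : ℂ)) := by
  ext i j
  fin_cases i <;> fin_cases j <;> simp [σ3, Matrix.diagonal] <;> push_cast <;> ring

lemma herm_M4 (eA eB g : ℝ) : (M4 eA eB g).IsHermitian := by
  rw [Matrix.IsHermitian]
  ext i j
  fin_cases i <;> fin_cases j <;>
    simp [M4, Matrix.conjTranspose_apply] <;> push_cast <;>
    simp [Complex.conj_ofReal] <;> ring_nf <;>
    simp [← Complex.ofReal_neg, ← Complex.ofReal_add, ← Complex.ofReal_sub, Complex.conj_ofReal]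

lemma herm_HAB (eA eB g : ℝ) : (HAB eA eB g).IsHermitian := by
  rw [HAB_reindex, Matrix.reindex_apply]
  exact (herm_M4 eA eB g).submatrix _

end Concrete

section CapEval

lemma Cap_eq {m : Type*} [Fintype m] [DecidableEq m] {ρ H : Matrix m m ℂ}
    (hρ : ρ.IsHermitian) (hH : H.IsHermitian) :
    Cap ρ H = cap (eigsDesc hρ) (eigsDesc hH) := by
  unfold Cap
  rw [dif_pos hρ, dif_pos hH]

lemma cap_two (lam eps : Fin 2 → ℝ) :
    cap lam eps = eps 0 * (lam 0 - lam 1) + eps 1 * (lam 1 - lam 0) := by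
  simp [cap, Fin.sum_univ_two, show Fin.rev (0 : Fin 2) = 1 from rfl,
    show Fin.rev (1 : Fin 2) = 0 from rfl]

lemma cap_four (lam eps : Fin 4 → ℝ) :
    cap lam eps = eps 0 * (lam 0 - lam 3) + eps 1 * (lam 1 - lam 2)
      + eps 2 * (lam 2 - lam 1) + eps 3 * (lam 3 - lam 0) := by
  simp [cap, Fin.sum_univ_four, show Fin.rev (0 : Fin 4) = 3 from rfl,
    show Fin.rev (1 : Fin 4) = 2 from rfl, show Fin.rev (2 : Fin 4) = 1 from rfl,
    show Fin.rev (3 : Fin 4) = 0 from rfl]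
  try ring

end CapEval

section KeyIneq

lemma one_le_of_ne_zero {b : Fin 4} (h : b ≠ 0) : (1 : Fin 4) ≤ b := by
  rw [Fin.le_def]
  have : b.val ≠ 0 := fun hh => h (Fin.ext hh)
  omega

lemma le_two_of_ne_three {b : Fin 4} (h : b ≠ 3) : b ≤ (2 : Fin 4) := by
  rw [Fin.le_def]
  have h1 : b.val ≠ 3 := fun hh => h (Fin.ext hh)
  have := b.isLt
  omega

lemma key_ineq (p00 p01 p10 p11 eA eB g : ℝ)
    (hAB : eA ≥ eB) (hB : eB ≥ 0) (hg : 0 ≤ g)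
    (α : Fin 4 → ℝ) (hanti : Antitone α)
    (e : Equiv.Perm (Fin 4)) (hα : α = ![p00, p01, p10, p11] ∘ e) :
    2 * eA * |(p00 + p01) - (p10 + p11)| + 2 * eB * |(p00 + p10) - (p01 + p11)|
      ≤ 2 * E1 eA eB g * (α 0 - α 3) + 2 * E2 eA eB g * (α 1 - α 2) := by
  set q : Fin 4 → ℝ := ![p00, p01, p10, p11] with hq
  have hqα : ∀ i, q i = α (e.symm i) := by
    intro i; rw [hα]; simp
  have hup : ∀ a : Fin 4, α a ≤ α 0 := fun a => hanti (Fin.zero_le a)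
  have hlo : ∀ a : Fin 4, α 3 ≤ α a := fun a => hanti (Fin.le_last a)
  have hpair : ∀ a b : Fin 4, a ≠ b → α a + α b ≤ α 0 + α 1 := by
    intro a b hab
    by_cases ha : a = 0
    · subst ha
      have hb : (1 : Fin 4) ≤ b := one_le_of_ne_zero (Ne.symm hab)
      exact add_le_add le_rfl (hanti hb)
    · have ha1 : (1 : Fin 4) ≤ a := one_le_of_ne_zero ha
      have := hanti ha1
      have := hup b
      linarith [add_comm (α a) (α b)]
  have hpair' : ∀ a b : Fin 4, a ≠ b → α 2 + α 3 ≤ α a + α b := by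
    intro a b hab
    by_cases ha : a = 3
    · subst ha
      have hb : b ≤ (2 : Fin 4) := le_two_of_ne_three (Ne.symm hab)
      have := hanti hb
      linarith
    · have ha1 : a ≤ (2 : Fin 4) := le_two_of_ne_three ha
      have := hanti ha1
      have := hlo b
      linarith
  have hne : ∀ i j : Fin 4, i ≠ j → e.symm i ≠ e.symm j := by
    intro i j hij hc
    exact hij (by simpa using congrArg e hc)
  have b00u : p00 ≤ α 0 := by rw [show p00 = q 0 from rfl, hqα 0]; exact hup _
  have b01u : p01 ≤ α 0 := by rw [show p01 = q 1 from rfl, hqα 1]; exact hup _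
  have b10u : p10 ≤ α 0 := by rw [show p10 = q 2 from rfl, hqα 2]; exact hup _
  have b11u : p11 ≤ α 0 := by rw [show p11 = q 3 from rfl, hqα 3]; exact hup _
  have b00l : α 3 ≤ p00 := by rw [show p00 = q 0 from rfl, hqα 0]; exact hlo _
  have b01l : α 3 ≤ p01 := by rw [show p01 = q 1 from rfl, hqα 1]; exact hlo _
  have b10l : α 3 ≤ p10 := by rw [show p10 = q 2 from rfl, hqα 2]; exact hlo _
  have b11l : α 3 ≤ p11 := by rw [show p11 = q 3 from rfl, hqα 3]; exact hlo _
  have pairsum : ∀ i j : Fin 4, i ≠ j → q i + q j ≤ α 0 + α 1 := by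
    intro i j hij; rw [hqα i, hqα j]; exact hpair _ _ (hne _ _ hij)
  have pairsum' : ∀ i j : Fin 4, i ≠ j → α 2 + α 3 ≤ q i + q j := by
    intro i j hij; rw [hqα i, hqα j]; exact hpair' _ _ (hne _ _ hij)
  have hA01 := pairsum 0 1 (by decide)
  have hA23 := pairsum 2 3 (by decide)
  have hA01' := pairsum' 0 1 (by decide)
  have hA23' := pairsum' 2 3 (by decide)
  have hB02 := pairsum 0 2 (by decide)
  have hB13 := pairsum 1 3 (by decide)
  have hB02' := pairsum' 0 2 (by decide)
  have hB13' := pairsum' 1 3 (by decide)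
  simp only [hq, Matrix.cons_val_zero, Matrix.cons_val_one, Matrix.head_cons,
    Matrix.cons_val_two, Matrix.tail_cons, Matrix.cons_val_three]
    at hA01 hA23 hA01' hA23' hB02 hB13 hB02' hB13'
  set u := α 0 - α 3 with hu
  set v := α 1 - α 2 with hvv
  set x := |(p00 + p01) - (p10 + p11)| with hx
  set y := |(p00 + p10) - (p01 + p11)| with hy
  have hxs : x ≤ u + v := by
    rw [hx, abs_le]; constructor <;> [linarith; linarith]
  have hys : y ≤ u + v := by
    rw [hy, abs_le]; constructor <;> [linarith; linarith]
  have hxy : x + y ≤ 2 * u := by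
    rcases abs_cases ((p00 + p01) - (p10 + p11)) with ⟨hx1, _⟩ | ⟨hx1, _⟩ <;>
    rcases abs_cases ((p00 + p10) - (p01 + p11)) with ⟨hy1, _⟩ | ⟨hy1, _⟩ <;>
      rw [hx, hy, hx1, hy1] <;> linarith
  have hu0 : 0 ≤ u := by rw [hu]; linarith [hlo 0]
  have hv0' : 0 ≤ v := by rw [hvv]; have := hanti (show (1:Fin 4) ≤ 2 by decide); linarith
  have hx0 : 0 ≤ x := abs_nonneg _
  have hy0 : 0 ≤ y := abs_nonneg _
  have hE1 : eA + eB ≤ E1 eA eB g := by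
    have h1 : Real.sqrt ((eA + eB)^2) ≤ Real.sqrt ((eA + eB)^2 + g^2) :=
      Real.sqrt_le_sqrt (by nlinarith)
    rw [Real.sqrt_sq (by linarith : (0:ℝ) ≤ eA + eB)] at h1
    exact h1
  have hE2 : eA - eB ≤ E2 eA eB g := by
    have h1 : Real.sqrt ((eA - eB)^2) ≤ Real.sqrt ((eA - eB)^2 + g^2) :=
      Real.sqrt_le_sqrt (by nlinarith)
    rw [Real.sqrt_sq (by linarith : (0:ℝ) ≤ eA - eB)] at h1
    exact h1
  have step1 : 2 * (eA + eB) * u + 2 * (eA - eB) * v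
      ≤ 2 * E1 eA eB g * u + 2 * E2 eA eB g * v := by
    have h1 := mul_le_mul_of_nonneg_right hE1 hu0
    have h2 := mul_le_mul_of_nonneg_right hE2 hv0'
    ring_nf at h1 h2 ⊢
    linarith
  have step2 : 2 * eA * x + 2 * eB * y ≤ 2 * (eA + eB) * u + 2 * (eA - eB) * v := by
    have h1 : 0 ≤ (eA - eB) * (u + v - x) := mul_nonneg (by linarith) (by linarith)
    have h2 : 0 ≤ eB * (2 * u - x - y) := mul_nonneg hB (by linarith)
    ring_nf at h1 h2 ⊢
    linarith
  linarith

end KeyIneq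

open Polynomial in
/-- Lemma 2: for a diagonal (incoherent) two-qubit state, the sum of the
subsystem capacities is bounded by the total capacity. -/
theorem incoherent_capacity_monogamy (p00 p01 p10 p11 eA eB g : ℝ)
    (h00 : 0 ≤ p00) (h01 : 0 ≤ p01) (h10 : 0 ≤ p10) (h11 : 0 ≤ p11)
    (hsum : p00 + p01 + p10 + p11 = 1)
    (hAB : eA ≥ eB) (hB : eB ≥ 0) (hg : 0 ≤ g) :
    Cap (Matrix.diagonal (fun a : Fin 2 => ((![p00 + p01, p10 + p11] a : ℝ) : ℂ)))
        ((eA : ℂ) • σ3) +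
    Cap (Matrix.diagonal (fun b : Fin 2 => ((![p00 + p10, p01 + p11] b : ℝ) : ℂ)))
        ((eB : ℂ) • σ3) ≤
    Cap (Matrix.diagonal (fun x : Fin 2 × Fin 2 => ((![![p00, p01], ![p10, p11]] x.1 x.2 : ℝ) : ℂ)))
        (HAB eA eB g) := by
  have hA0 : (0:ℝ) ≤ eA := le_trans hB hAB
  -- Hermitian facts
  have hρA : (Matrix.diagonal (fun a : Fin 2 => ((![p00 + p01, p10 + p11] a : ℝ) : ℂ))).IsHermitian :=
    herm_diag_real _
  have hρB : (Matrix.diagonal (fun b : Fin 2 => ((![p00 + p10, p01 + p11] b : ℝ) : ℂ))).IsHermitian :=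
    herm_diag_real _
  have hρAB : (Matrix.diagonal
      (fun x : Fin 2 × Fin 2 => ((![![p00, p01], ![p10, p11]] x.1 x.2 : ℝ) : ℂ))).IsHermitian :=
    herm_diag_real _
  have hHA : ((eA : ℂ) • σ3).IsHermitian := by
    rw [smul_σ3_eq_diag]; exact herm_diag_real _
  have hHB : ((eB : ℂ) • σ3).IsHermitian := by
    rw [smul_σ3_eq_diag]; exact herm_diag_real _
  have hHAB : (HAB eA eB g).IsHermitian := herm_HAB eA eB g
  -- eigsDesc computations
  have echA : eigsDesc hρA = dsort ![p00 + p01, p10 + p11] :=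
    eigsDesc_eq_dsort hρA ![p00 + p01, p10 + p11] (_root_.charpoly_diagonal _)
  have echB : eigsDesc hρB = dsort ![p00 + p10, p01 + p11] :=
    eigsDesc_eq_dsort hρB ![p00 + p10, p01 + p11] (_root_.charpoly_diagonal _)
  have echHA : eigsDesc hHA = dsort ![eA, -eA] :=
    eigsDesc_eq_dsort hHA ![eA, -eA]
      (by rw [smul_σ3_eq_diag]; exact _root_.charpoly_diagonal _)
  have echHB : eigsDesc hHB = dsort ![eB, -eB] :=
    eigsDesc_eq_dsort hHB ![eB, -eB]
      (by rw [smul_σ3_eq_diag]; exact _root_.charpoly_diagonal _)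
  have hcAB : (Matrix.diagonal
      (fun x : Fin 2 × Fin 2 => ((![![p00, p01], ![p10, p11]] x.1 x.2 : ℝ) : ℂ))).charpoly
      = ∏ i : Fin 4, ((X : ℂ[X]) - C ((![p00, p01, p10, p11] i : ℝ) : ℂ)) := by
    rw [_root_.charpoly_diagonal]
    rw [show (∏ x : Fin 2 × Fin 2,
        ((X : ℂ[X]) - C ((![![p00, p01], ![p10, p11]] x.1 x.2 : ℝ) : ℂ)))
      = ∏ a : Fin 2, ∏ b : Fin 2,
        ((X : ℂ[X]) - C ((![![p00, p01], ![p10, p11]] a b : ℝ) : ℂ)) from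
        Fintype.prod_prod_type _]
    rw [Fin.prod_univ_two, Fin.prod_univ_two, Fin.prod_univ_two, Fin.prod_univ_four]
    simp only [Matrix.cons_val_zero, Matrix.cons_val_one, Matrix.head_cons,
      Matrix.cons_val_two, Matrix.tail_cons, Matrix.cons_val_three]
    ring
  have echAB : eigsDesc hρAB = dsort ![p00, p01, p10, p11] :=
    eigsDesc_eq_dsort hρAB ![p00, p01, p10, p11] hcAB
  have hcHAB : (HAB eA eB g).charpoly
      = ∏ i : Fin 4, ((X : ℂ[X])
          - C ((![E1 eA eB g, E2 eA eB g, -(E2 eA eB g), -(E1 eA eB g)] i : ℝ) : ℂ)) := by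
    rw [HAB_reindex, Matrix.charpoly_reindex, charpoly_M4]
  have echHAB : eigsDesc hHAB
      = dsort ![E1 eA eB g, E2 eA eB g, -(E2 eA eB g), -(E1 eA eB g)] :=
    eigsDesc_eq_dsort hHAB _ hcHAB
  -- E-facts
  have hE2nn : 0 ≤ E2 eA eB g := Real.sqrt_nonneg _
  have hE12 : E2 eA eB g ≤ E1 eA eB g := Real.sqrt_le_sqrt (by nlinarith)
  have hmu : dsort ![E1 eA eB g, E2 eA eB g, -(E2 eA eB g), -(E1 eA eB g)]
      = ![E1 eA eB g, E2 eA eB g, -(E2 eA eB g), -(E1 eA eB g)] :=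
    dsort_eq_self_of_antitone (antitone_four hE12 (by linarith) (by linarith))
  have hmA : dsort ![eA, -eA] = ![eA, -eA] :=
    dsort_eq_self_of_antitone (antitone_pair (by linarith))
  have hmB : dsort ![eB, -eB] = ![eB, -eB] :=
    dsort_eq_self_of_antitone (antitone_pair (by linarith))
  rw [Cap_eq hρA hHA, Cap_eq hρB hHB, Cap_eq hρAB hHAB, echA, echB, echHA, echHB,
    echAB, echHAB]
  show cap (dsort ![p00 + p01, p10 + p11]) (dsort ![eA, -eA])
      + cap (dsort ![p00 + p10, p01 + p11]) (dsort ![eB, -eB])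
    ≤ cap (dsort ![p00, p01, p10, p11])
        (dsort ![E1 eA eB g, E2 eA eB g, -(E2 eA eB g), -(E1 eA eB g)])
  rw [hmu, hmA, hmB, dsort_pair (p00 + p01) (p10 + p11), dsort_pair (p00 + p10) (p01 + p11),
    cap_two, cap_two, cap_four]
  simp only [Matrix.cons_val_zero, Matrix.cons_val_one, Matrix.head_cons,
    Matrix.cons_val_two, Matrix.tail_cons, Matrix.cons_val_three]
  obtain ⟨e, he⟩ := dsort_perm_exists ![p00, p01, p10, p11]
  have hk := key_ineq p00 p01 p10 p11 eA eB g hAB hB hg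
    (dsort ![p00, p01, p10, p11]) (dsort_antitone _) e he
  have habsA : max (p00 + p01) (p10 + p11) - min (p00 + p01) (p10 + p11)
      = |(p00 + p01) - (p10 + p11)| := (max_sub_min_eq_abs _ _).trans (abs_sub_comm _ _)
  have habsB : max (p00 + p10) (p01 + p11) - min (p00 + p10) (p01 + p11)
      = |(p00 + p10) - (p01 + p11)| := (max_sub_min_eq_abs _ _).trans (abs_sub_comm _ _)
  set α := dsort ![p00, p01, p10, p11]
  nlinarith [hk, habsA, habsB]
end
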